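/- Let A be a brace of cardinality p^n with p > n + 1 prime, and fix ℘⁻¹ : pA → A with p·℘⁻¹(a) = a. Then the operation [a] ⊙ [b] = [℘⁻¹((pa) * b)] is a well-defined binary operation on A/ann(p²): it does not depend on the choice of coset representatives a, b. -/

import Mathlib

/-- A left brace: an abelian group `(A,+)` together with a group operation `circ`
(whose identity is `0`) satisfying `a ∘ (b + c) + a = a ∘ b + a ∘ c`. -/
structure LeftBrace (A : Type*) [AddCommGroup A] where
  circ : A → A → A
  inv : A → A
  circ_assoc : ∀ a b c, circ (circ a b) c = circ a (circ b c)
  circ_zero : ∀ a, circ a 0 = a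
  zero_circ : ∀ a, circ 0 a = a
  inv_circ : ∀ a, circ (inv a) a = 0
  compat : ∀ a b c, circ a (b + c) + a = circ a b + circ a c

namespace LeftBrace

variable {A : Type*} [AddCommGroup A]

/-- The star operation `a * b = a ∘ b - a - b`. -/
def star (B : LeftBrace A) (a b : A) : A := B.circ a b - a - b

/-- `circPow B a n` is the product `a ∘ a ∘ ⋯ ∘ a` of `n` copies of `a`. -/
def circPow (B : LeftBrace A) (a : A) : ℕ → A
  | 0 => 0
  | n + 1 => B.circ a (B.circPow a n)

variable (B : LeftBrace A)


/-- λ as an additive endomorphism. -/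
def lam (x : A) : AddMonoid.End A where
  toFun b := B.circ x b - x
  map_zero' := by simp [B.circ_zero]
  map_add' b c := by
    have h := B.compat x b c
    have : B.circ x (b + c) = B.circ x b + B.circ x c - x := by
      rw [eq_sub_iff_add_eq]; rw [← h]
    rw [this]; abel

lemma lam_apply (x b : A) : B.lam x b = B.circ x b - x := rfl

lemma star_eq (x b : A) : B.star x b = B.lam x b - b := by
  simp [star, lam_apply]

lemma lam_mul (x y : A) : B.lam (B.circ x y) = B.lam x * B.lam y := by
  refine AddMonoidHom.ext fun b => ?_
  show B.circ (B.circ x y) b - B.circ x y = B.lam x (B.lam y b)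
  rw [B.lam_apply y b, map_sub (B.lam x), B.lam_apply, B.lam_apply, ← B.circ_assoc]
  abel

lemma lam_zero : B.lam 0 = 1 := by
  refine AddMonoidHom.ext fun b => ?_
  show B.circ 0 b - 0 = b
  rw [B.zero_circ, sub_zero]

lemma circ_inv_right (x : A) : B.circ x (B.inv x) = 0 := by
  calc B.circ x (B.inv x)
      = B.circ 0 (B.circ x (B.inv x)) := (B.zero_circ _).symm
    _ = B.circ (B.circ (B.inv (B.inv x)) (B.inv x)) (B.circ x (B.inv x)) := by
        rw [B.inv_circ]
    _ = B.circ (B.inv (B.inv x)) (B.circ (B.circ (B.inv x) x) (B.inv x)) := by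
        rw [B.circ_assoc, B.circ_assoc]
    _ = B.circ (B.inv (B.inv x)) (B.inv x) := by rw [B.inv_circ, B.zero_circ]
    _ = 0 := B.inv_circ _

lemma circ_eq_add (x y : A) : B.circ x y = x + B.lam x y := by
  rw [lam_apply]; abel

lemma lam_lam_inv (x t : A) : B.lam x (B.lam (B.inv x) t) = t := by
  have : B.lam x (B.lam (B.inv x) t) = (B.lam x * B.lam (B.inv x)) t := rfl
  rw [this, ← lam_mul, circ_inv_right, lam_zero]; rfl

lemma circ_add_eq (x t : A) : B.circ x (B.lam (B.inv x) t) = x + t := by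
  rw [circ_eq_add, lam_lam_inv]

/-- star composition law -/
lemma star_circ (x y b : A) :
    B.star (B.circ x y) b = B.star x (B.star y b) + B.star x b + B.star y b := by
  simp only [star_eq, lam_mul]
  have : (B.lam x * B.lam y) b = B.lam x (B.lam y b) := rfl
  rw [this]
  have h2 : B.lam x (B.lam y b - b) = B.lam x (B.lam y b) - B.lam x b := map_sub _ _ _
  rw [h2]; abel

/-- the operator s_x = λ_x − 1 -/
def sOp (x : A) : AddMonoid.End A := B.lam x - 1

lemma sOp_apply (x b : A) : B.sOp x b = B.star x b := by
  simp only [sOp, star_eq]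
  rfl

lemma star_zero_right (x : A) : B.star x 0 = 0 := by
  rw [← sOp_apply]; exact map_zero _

lemma zero_star (b : A) : B.star 0 b = 0 := by
  simp [star, B.zero_circ]

end LeftBrace
namespace LeftBrace

variable {A : Type*} [AddCommGroup A] (B : LeftBrace A)

/-- the descending left series -/
def Dser : ℕ → AddSubgroup A
  | 0 => ⊤
  | d + 1 => AddSubgroup.closure {z | ∃ x v, v ∈ Dser d ∧ B.star x v = z}

lemma star_mem_Dser {d : ℕ} {v : A} (x : A) (hv : v ∈ B.Dser d) :
    B.star x v ∈ B.Dser (d + 1) := by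
  exact AddSubgroup.subset_closure ⟨x, v, hv, rfl⟩

lemma Dser_succ_le : ∀ d, B.Dser (d + 1) ≤ B.Dser d := by
  intro d
  induction d with
  | zero => exact le_top
  | succ d ih =>
    show AddSubgroup.closure _ ≤ _
    rw [AddSubgroup.closure_le]
    rintro z ⟨x, v, hv, rfl⟩
    exact B.star_mem_Dser x (ih hv)

lemma Dser_le_Dser {d e : ℕ} (h : d ≤ e) : B.Dser e ≤ B.Dser d := by
  induction e with
  | zero => simp_all
  | succ e ih =>
    rcases Nat.eq_or_lt_of_le h with rfl | h'
    · exact le_rfl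
    · exact (B.Dser_succ_le e).trans (ih (Nat.lt_succ_iff.mp h'))

lemma lam_mem_Dser {d : ℕ} {v : A} (x : A) (hv : v ∈ B.Dser d) :
    B.lam x v ∈ B.Dser d := by
  cases d with
  | zero => exact AddSubgroup.mem_top _
  | succ d =>
    revert hv
    refine fun hv => AddSubgroup.closure_induction ?_ ?_ ?_ ?_ hv
    · rintro z ⟨y, v, hv, rfl⟩
      have key : B.lam x (B.star y v) = B.star (B.circ x y) v - B.star x v := by
        have h1 : B.star (B.circ x y) v = B.lam (B.circ x y) v - v := B.star_eq _ _
        have h2 : B.lam (B.circ x y) v = B.lam x (B.lam y v) := by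
          rw [B.lam_mul]; rfl
        rw [h1, h2, B.star_eq x v, B.star_eq y v, map_sub (B.lam x)]
        abel
      rw [key]
      exact sub_mem (B.star_mem_Dser _ hv) (B.star_mem_Dser _ hv)
    · rw [map_zero]; exact zero_mem _
    · intro y z _ _ hy hz
      rw [map_add]; exact add_mem hy hz
    · intro y _ hy
      rw [map_neg]; exact neg_mem hy

/-- pA as an additive subgroup -/
def pMul (p : ℕ) : AddSubgroup A where
  carrier := Set.range (fun x : A => p • x)
  zero_mem' := ⟨0, smul_zero p⟩
  add_mem' := by rintro _ _ ⟨x, rfl⟩ ⟨y, rfl⟩; exact ⟨x + y, smul_add p x y⟩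
  neg_mem' := by rintro _ ⟨x, rfl⟩; exact ⟨-x, smul_neg p x⟩

lemma mem_pMul_iff {p : ℕ} {z : A} : z ∈ pMul (A := A) p ↔ ∃ x, p • x = z := Iff.rfl

end LeftBrace
section Coinv

open MulAction

universe v

/-- If a finite `p`-group acts on a finite abelian `p`-group `V` such that the elements
`g • v - v` generate all of `V`, then `V` is trivial. -/
lemma coinv_aux {p : ℕ} (hp : p.Prime) {G : Type*} [Group G] (hG : IsPGroup p G)
    (N : ℕ) :
    ∀ (V : Type v) [AddCommGroup V] [Finite V] [DistribMulAction G V],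
      Nat.card V ≤ N → (∃ k, Nat.card V = p ^ k) →
      AddSubgroup.closure {z : V | ∃ (g : G) (v : V), g • v - v = z} = ⊤ →
      Subsingleton V := by
  induction N with
  | zero =>
    intro V inst1 inst2 inst3 hle _ _
    have : Nat.card V ≠ 0 := Nat.card_ne_zero.mpr ⟨⟨0⟩, inst2⟩
    omega
  | succ N ih =>
    intro V inst1 inst2 inst3 hle ⟨k, hk⟩ hgen
    rcases subsingleton_or_nontrivial V with hss | hnt
    · exact hss
    exfalso
    haveI : Fact p.Prime := ⟨hp⟩
    -- p divides card V
    have hk1 : 1 ≤ k := by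
      rcases Nat.eq_zero_or_pos k with rfl | h
      · exfalso
        rw [pow_zero] at hk
        have := Finite.one_lt_card_iff_nontrivial.mpr hnt
        omega
      · exact h
    have hpV : p ∣ Nat.card V := by
      rw [hk]; exact dvd_pow_self p (by omega)
    -- fixed points
    have hmod := hG.card_modEq_card_fixedPoints V
    have hpfix : p ∣ Nat.card (fixedPoints G V) :=
      (Nat.modEq_zero_iff_dvd).mp ((hmod.symm.trans (Nat.modEq_zero_iff_dvd.mpr hpV)))
    have h0fix : (0 : V) ∈ fixedPoints G V := fun g => smul_zero g
    have hfixpos : 0 < Nat.card (fixedPoints G V) :=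
      Nat.card_pos_iff.mpr ⟨⟨⟨0, h0fix⟩⟩, Set.Finite.to_subtype (Set.toFinite _)⟩
    have hfix2 : 1 < Nat.card (fixedPoints G V) := by
      have := Nat.le_of_dvd hfixpos hpfix
      have := hp.two_le
      omega
    haveI : Nontrivial (fixedPoints G V) := Finite.one_lt_card_iff_nontrivial.mp hfix2
    obtain ⟨⟨w, hwfix⟩, hwne⟩ := exists_ne (⟨0, h0fix⟩ : fixedPoints G V)
    have hw : w ≠ 0 := fun h => hwne (Subtype.ext h)
    -- the invariant subgroup generated by w
    set W := AddSubgroup.zmultiples w with hW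
    have hWfix : ∀ (g : G), ∀ x ∈ W, g • x = x := by
      rintro g x hx
      obtain ⟨m, rfl⟩ := AddSubgroup.mem_zmultiples_iff.mp hx
      have hzs : g • (m • w) = m • (g • w) :=
        AddMonoidHom.map_zsmul (DistribMulAction.toAddMonoidHom V g) m w
      rw [hzs, hwfix g]
    -- quotient action
    letI : SMul G (V ⧸ W) :=
      ⟨fun g => QuotientAddGroup.map W W (DistribMulAction.toAddMonoidHom V g)
        (fun x hx => by
          show (DistribMulAction.toAddMonoidHom V g) x ∈ W
          simpa [hWfix g x hx] using hx)⟩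
    have hcompat : ∀ (g : G) (x : V),
        (QuotientAddGroup.mk' W) (g • x) = g • (QuotientAddGroup.mk' W) x := fun g x => rfl
    haveI : Finite (V ⧸ W) := Finite.of_surjective _ (QuotientAddGroup.mk'_surjective W)
    letI : DistribMulAction G (V ⧸ W) :=
      Function.Surjective.distribMulAction (QuotientAddGroup.mk' W)
        (QuotientAddGroup.mk'_surjective W) hcompat
    -- generators pass to the quotient
    have hgenQ : AddSubgroup.closure {z : V ⧸ W | ∃ (g : G) (v : V ⧸ W), g • v - v = z} = ⊤ := by
      rw [eq_top_iff]
      rintro q -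
      obtain ⟨v, rfl⟩ := QuotientAddGroup.mk'_surjective W q
      have hv : v ∈ AddSubgroup.closure {z : V | ∃ (g : G) (v : V), g • v - v = z} := by
        rw [hgen]; trivial
      have hmem := AddSubgroup.mem_map_of_mem (QuotientAddGroup.mk' W) hv
      rw [AddMonoidHom.map_closure] at hmem
      refine AddSubgroup.closure_mono ?_ hmem
      rintro _ ⟨z, ⟨g, v', rfl⟩, rfl⟩
      exact ⟨g, (QuotientAddGroup.mk' W) v', by rw [map_sub, hcompat]⟩
    -- cardinalities
    have hcardW : 1 < Nat.card W := by
      haveI : Nontrivial W := by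
        refine ⟨⟨⟨w, AddSubgroup.mem_zmultiples w⟩, 0, fun h => hw ?_⟩⟩
        exact congrArg Subtype.val h
      exact Finite.one_lt_card_iff_nontrivial.mpr this
    have hprod := AddSubgroup.card_eq_card_quotient_mul_card_addSubgroup W
    have hQpos : 0 < Nat.card (V ⧸ W) :=
      Nat.card_pos_iff.mpr ⟨⟨0⟩, inferInstance⟩
    have hQlt : Nat.card (V ⧸ W) < Nat.card V := by
      rw [hprod]
      exact lt_mul_of_one_lt_right hQpos hcardW
    have hQdvd : Nat.card (V ⧸ W) ∣ Nat.card V := ⟨Nat.card W, hprod⟩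
    have hQpow : ∃ m, Nat.card (V ⧸ W) = p ^ m := by
      rw [hk] at hQdvd
      obtain ⟨m, -, hm⟩ := (Nat.dvd_prime_pow hp).mp hQdvd
      exact ⟨m, hm⟩
    have hQss : Subsingleton (V ⧸ W) := ih (V ⧸ W) (by omega) hQpow hgenQ
    -- hence V = W and the action is trivial
    have hVW : ∀ v : V, v ∈ W := by
      intro v
      have : (QuotientAddGroup.mk' W) v = 0 := Subsingleton.elim _ _
      exact (QuotientAddGroup.eq_zero_iff v).mp this
    have htriv : {z : V | ∃ (g : G) (v : V), g • v - v = z} ⊆ {0} := by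
      rintro _ ⟨g, v, rfl⟩
      rw [hWfix g v (hVW v), sub_self]
      rfl
    have : (⊤ : AddSubgroup V) ≤ ⊥ := by
      rw [← hgen]
      rw [AddSubgroup.closure_le]
      exact htriv.trans (by simp)
    exact hw ((AddSubgroup.mem_bot).mp (this (AddSubgroup.mem_top w)))

end Coinv
namespace LeftBrace

variable {A : Type*} [AddCommGroup A] [Fintype A] (B : LeftBrace A) {p n : ℕ}

lemma Dser_eq_bot_of_eq (hp : p.Prime) (hcard : Fintype.card A = p ^ n)
    {d : ℕ} (heq : B.Dser (d + 1) = B.Dser d) : B.Dser d = ⊥ := by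
  letI : Group A :=
    { mul := B.circ
      one := 0
      inv := B.inv
      mul_assoc := B.circ_assoc
      one_mul := B.zero_circ
      mul_one := B.circ_zero
      inv_mul_cancel := B.inv_circ }
  have hGp : IsPGroup p A := IsPGroup.of_card (by
    rw [Nat.card_eq_fintype_card, hcard])
  set V := B.Dser d with hV
  letI : DistribMulAction A ↥V :=
    { smul := fun g v => ⟨B.lam g v.1, B.lam_mem_Dser g v.2⟩
      one_smul := fun v => Subtype.ext (by
        show B.lam 0 v.1 = v.1
        rw [B.lam_zero]; rfl)
      mul_smul := fun g h v => Subtype.ext (by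
        show B.lam (B.circ g h) v.1 = B.lam g (B.lam h v.1)
        rw [B.lam_mul]; rfl)
      smul_zero := fun g => Subtype.ext (by
        show B.lam g (0 : A) = 0
        exact map_zero _)
      smul_add := fun g v w => Subtype.ext (by
        show B.lam g (v.1 + w.1) = B.lam g v.1 + B.lam g w.1
        exact map_add _ _ _) }
  have hVcard : ∃ k, Nat.card ↥V = p ^ k := by
    have hdvd : Nat.card ↥V ∣ Nat.card A := AddSubgroup.card_addSubgroup_dvd_card V
    have hA : Nat.card A = p ^ n := by rw [Nat.card_eq_fintype_card, hcard]
    rw [hA] at hdvd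
    obtain ⟨m, -, hm⟩ := (Nat.dvd_prime_pow hp).mp hdvd
    exact ⟨m, hm⟩
  have hgen : AddSubgroup.closure {z : ↥V | ∃ (g : A) (v : ↥V), g • v - v = z} = ⊤ := by
    set S := AddSubgroup.closure {z : ↥V | ∃ (g : A) (v : ↥V), g • v - v = z} with hS
    have key : B.Dser (d + 1) ≤ AddSubgroup.map V.subtype S := by
      show AddSubgroup.closure _ ≤ _
      rw [AddSubgroup.closure_le]
      rintro z ⟨x, v, hv, rfl⟩
      refine ⟨(x • (⟨v, hv⟩ : ↥V) - ⟨v, hv⟩ : ↥V), ?_, ?_⟩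
      · exact AddSubgroup.subset_closure ⟨x, ⟨v, hv⟩, rfl⟩
      · show (x • (⟨v, hv⟩ : ↥V) - ⟨v, hv⟩ : ↥V).1 = B.star x v
        rw [B.star_eq]
        rfl
    rw [heq] at key
    rw [eq_top_iff]
    rintro w -
    have hw : w.1 ∈ AddSubgroup.map V.subtype S := key w.2
    obtain ⟨s, hs, hsw⟩ := hw
    have : s = w := Subtype.ext hsw
    rwa [this] at hs
  have hss : Subsingleton ↥V :=
    coinv_aux hp hGp (Nat.card ↥V) ↥V le_rfl hVcard hgen
  rw [eq_bot_iff]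
  intro x hx
  have : (⟨x, hx⟩ : ↥V) = ⟨0, zero_mem V⟩ := Subsingleton.elim _ _
  simpa using congrArg Subtype.val this

end LeftBrace
namespace LeftBrace

variable {A : Type*} [AddCommGroup A] [Fintype A] (B : LeftBrace A) {p n : ℕ}

lemma Dser_n_eq_bot (hp : p.Prime) (hcard : Fintype.card A = p ^ n) :
    B.Dser n = ⊥ := by
  have main : ∀ d, B.Dser d = ⊥ ∨ Nat.card (B.Dser d) * p ^ d ∣ p ^ n := by
    intro d
    induction d with
    | zero =>
      right
      have h0 : Nat.card (B.Dser 0) = p ^ n := by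
        show Nat.card (⊤ : AddSubgroup A) = _
        rw [Nat.card_congr AddSubgroup.topEquiv.toEquiv, Nat.card_eq_fintype_card, hcard]
      rw [h0, pow_zero, mul_one]
    | succ d ih =>
      rcases ih with hbot | hdvd
      · left
        exact le_bot_iff.mp (hbot ▸ B.Dser_succ_le d)
      · by_cases heq : B.Dser (d + 1) = B.Dser d
        · left
          have hb := B.Dser_eq_bot_of_eq hp hcard heq
          exact le_bot_iff.mp (hb ▸ B.Dser_succ_le d)
        · right
          have hle := B.Dser_succ_le d
          have h1 : Nat.card (B.Dser (d + 1)) ∣ Nat.card (B.Dser d) :=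
            AddSubgroup.card_dvd_of_le hle
          have hne : Nat.card (B.Dser (d + 1)) ≠ Nat.card (B.Dser d) := by
            intro hcardeq
            apply heq
            apply SetLike.ext'
            refine Set.eq_of_subset_of_ncard_le hle ?_ (Set.toFinite _)
            rw [← Nat.card_coe_set_eq, ← Nat.card_coe_set_eq]
            exact le_of_eq hcardeq.symm
          have hdn : Nat.card (B.Dser d) ∣ p ^ n :=
            dvd_trans (dvd_mul_right _ _) hdvd
          obtain ⟨j, hjle, hj⟩ := (Nat.dvd_prime_pow hp).mp hdn
          rw [hj] at h1 hne
          obtain ⟨i, hij, hi⟩ := (Nat.dvd_prime_pow hp).mp h1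
          have hlt : i < j := by
            rcases lt_or_eq_of_le hij with h | h
            · exact h
            · exact absurd (by rw [hi, h]) hne
          have hstep : Nat.card (B.Dser (d + 1)) * p ∣ Nat.card (B.Dser d) := by
            rw [hi, hj, ← pow_succ]
            exact pow_dvd_pow p hlt
          calc Nat.card (B.Dser (d + 1)) * p ^ (d + 1)
              = Nat.card (B.Dser (d + 1)) * p * p ^ d := by ring
            _ ∣ Nat.card (B.Dser d) * p ^ d := mul_dvd_mul_right hstep _
            _ ∣ p ^ n := hdvd
  rcases main n with h | h
  · exact h
  · have hppos : 0 < p ^ n := pow_pos hp.pos n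
    have h1 : Nat.card (B.Dser n) ∣ 1 := by
      have h' : Nat.card (B.Dser n) * p ^ n ∣ 1 * p ^ n := by simpa using h
      exact (Nat.mul_dvd_mul_iff_right hppos).mp h'
    exact AddSubgroup.card_eq_one.mp (Nat.dvd_one.mp h1)

lemma sOp_pow_mem_Dser (x v : A) (k d : ℕ) (hv : v ∈ B.Dser d) :
    ((B.sOp x) ^ k) v ∈ B.Dser (k + d) := by
  induction k generalizing v d with
  | zero => simpa using hv
  | succ k ih =>
    have hstep : (B.sOp x) v ∈ B.Dser (d + 1) := by
      rw [B.sOp_apply]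
      exact B.star_mem_Dser x hv
    have := ih ((B.sOp x) v) (d + 1) hstep
    have hpow : ((B.sOp x) ^ (k + 1)) v = ((B.sOp x) ^ k) ((B.sOp x) v) := by
      rw [pow_succ]
      rfl
    rw [hpow]
    exact B.Dser_le_Dser (le_of_eq (by omega)) this

lemma sOp_pow_eq_zero (hp : p.Prime) (hcard : Fintype.card A = p ^ n)
    (x v : A) {k : ℕ} (hk : n ≤ k) : ((B.sOp x) ^ k) v = 0 := by
  have h1 : ((B.sOp x) ^ k) v ∈ B.Dser (k + 0) :=
    B.sOp_pow_mem_Dser x v k 0 (AddSubgroup.mem_top v)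
  have h2 : ((B.sOp x) ^ k) v ∈ B.Dser n :=
    B.Dser_le_Dser (by omega) h1
  rw [B.Dser_n_eq_bot hp hcard] at h2
  simpa using h2

end LeftBrace
namespace LeftBrace

open Finset

variable {A : Type*} [AddCommGroup A] (B : LeftBrace A)

lemma lam_eq_one_add (x z : A) : B.lam x z = z + (B.sOp x) z := by
  show B.lam x z = z + (B.lam x - 1) z
  have : (B.lam x - 1) z = B.lam x z - z := rfl
  rw [this]; abel

lemma circPow_eq_sum (x : A) (m : ℕ) :
    B.circPow x m = ∑ k ∈ Finset.range m, (m.choose (k + 1)) • ((B.sOp x) ^ k) x := by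
  induction m with
  | zero => simp [circPow]
  | succ m ih =>
    have hlhs : B.circPow x (m + 1)
        = x + B.circPow x m + (B.sOp x) (B.circPow x m) := by
      show B.circ x (B.circPow x m) = _
      rw [B.circ_eq_add, B.lam_eq_one_add]
      abel
    rw [hlhs, ih, map_sum]
    have hterm : ∀ k, (B.sOp x) ((m.choose (k + 1)) • ((B.sOp x) ^ k) x)
        = (m.choose (k + 1)) • ((B.sOp x) ^ (k + 1)) x := by
      intro k
      rw [map_nsmul]
      congr 1
      rw [pow_succ']
      rfl
    rw [Finset.sum_congr rfl (fun k _ => hterm k)]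
    have hrhs : ∑ k ∈ Finset.range (m + 1), ((m + 1).choose (k + 1)) • ((B.sOp x) ^ k) x
        = (∑ k ∈ Finset.range (m + 1), (m.choose k) • ((B.sOp x) ^ k) x)
          + ∑ k ∈ Finset.range (m + 1), (m.choose (k + 1)) • ((B.sOp x) ^ k) x := by
      rw [← Finset.sum_add_distrib]
      refine Finset.sum_congr rfl fun k _ => ?_
      rw [Nat.choose_succ_succ, add_nsmul]
    rw [hrhs]
    have h1 : ∑ k ∈ Finset.range (m + 1), (m.choose k) • ((B.sOp x) ^ k) x
        = x + ∑ k ∈ Finset.range m, (m.choose (k + 1)) • ((B.sOp x) ^ (k + 1)) x := by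
      rw [Finset.sum_range_succ', Nat.choose_zero_right, one_smul, pow_zero, add_comm]
      try rfl
    have h2 : ∑ k ∈ Finset.range (m + 1), (m.choose (k + 1)) • ((B.sOp x) ^ k) x
        = ∑ k ∈ Finset.range m, (m.choose (k + 1)) • ((B.sOp x) ^ k) x := by
      rw [Finset.sum_range_succ, Nat.choose_succ_self, zero_smul, add_zero]
    rw [h1, h2]
    abel

lemma star_circPow (x b : A) (m : ℕ) :
    B.star (B.circPow x m) b
      = ∑ k ∈ Finset.range m, (m.choose (k + 1)) • ((B.sOp x) ^ (k + 1)) b := by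
  induction m with
  | zero => simp [circPow, zero_star]
  | succ m ih =>
    have hstep : B.star (B.circPow x (m + 1)) b
        = B.star x (B.star (B.circPow x m) b) + B.star x b + B.star (B.circPow x m) b := by
      show B.star (B.circ x (B.circPow x m)) b = _
      rw [B.star_circ]
    rw [hstep, ih, ← B.sOp_apply x, ← B.sOp_apply x, map_sum]
    have hterm : ∀ k, (B.sOp x) ((m.choose (k + 1)) • ((B.sOp x) ^ (k + 1)) b)
        = (m.choose (k + 1)) • ((B.sOp x) ^ (k + 2)) b := by
      intro k
      rw [map_nsmul]
      congr 1
      conv_rhs => rw [pow_succ']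
      rfl
    rw [Finset.sum_congr rfl (fun k _ => hterm k)]
    have hrhs : ∑ k ∈ Finset.range (m + 1), ((m + 1).choose (k + 1)) • ((B.sOp x) ^ (k + 1)) b
        = (∑ k ∈ Finset.range (m + 1), (m.choose k) • ((B.sOp x) ^ (k + 1)) b)
          + ∑ k ∈ Finset.range (m + 1), (m.choose (k + 1)) • ((B.sOp x) ^ (k + 1)) b := by
      rw [← Finset.sum_add_distrib]
      refine Finset.sum_congr rfl fun k _ => ?_
      rw [Nat.choose_succ_succ, add_nsmul]
    rw [hrhs]
    have h1 : ∑ k ∈ Finset.range (m + 1), (m.choose k) • ((B.sOp x) ^ (k + 1)) b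
        = (B.sOp x) b + ∑ k ∈ Finset.range m, (m.choose (k + 1)) • ((B.sOp x) ^ (k + 2)) b := by
      rw [Finset.sum_range_succ', Nat.choose_zero_right, one_smul, pow_one, add_comm]
    have h2 : ∑ k ∈ Finset.range (m + 1), (m.choose (k + 1)) • ((B.sOp x) ^ (k + 1)) b
        = ∑ k ∈ Finset.range m, (m.choose (k + 1)) • ((B.sOp x) ^ (k + 1)) b := by
      rw [Finset.sum_range_succ, Nat.choose_succ_self, zero_smul, add_zero]
    rw [h1, h2]
    abel

end LeftBrace
namespace LeftBrace

open Finset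

variable {A : Type*} [AddCommGroup A] [Fintype A] (B : LeftBrace A) {p n : ℕ}

lemma choose_factor (hp : p.Prime) {k : ℕ} (h1 : k ≠ 0) (h2 : k < p) :
    p.choose k = p * (p.choose k / p) :=
  (Nat.mul_div_cancel' (hp.dvd_choose_self h1 h2)).symm

/-- U1: `(a^{∘p}) * b ∈ pA`. -/
lemma star_circPow_p_mem (hp : p.Prime) (hpn : n + 1 < p)
    (hcard : Fintype.card A = p ^ n) (x b : A) :
    B.star (B.circPow x p) b ∈ pMul (A := A) p := by
  rw [B.star_circPow]
  have hp1 : p - 1 + 1 = p := by have := hp.two_le; omega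
  rw [← hp1, Finset.sum_range_succ]
  have hlast : ((B.sOp x) ^ (p - 1 + 1)) b = 0 :=
    B.sOp_pow_eq_zero hp hcard x b (by omega)
  rw [hlast, smul_zero, add_zero]
  refine ⟨∑ k ∈ Finset.range (p - 1), ((p - 1 + 1).choose (k + 1) / (p - 1 + 1)) •
    ((B.sOp x) ^ (k + 1)) b, ?_⟩
  change _ • _ = _
  rw [Finset.smul_sum]
  refine Finset.sum_congr rfl fun k hk => ?_
  rw [Finset.mem_range] at hk
  rw [← mul_nsmul']
  congr 1
  rw [hp1]
  exact (choose_factor hp (by omega) (by omega)).symm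

/-- U2: `(x^{∘p}) * u = 0` for `u ∈ ann(p)`. -/
lemma star_circPow_p_tors (hp : p.Prime) (hpn : n + 1 < p)
    (hcard : Fintype.card A = p ^ n) (x u : A) (hu : p • u = 0) :
    B.star (B.circPow x p) u = 0 := by
  rw [B.star_circPow]
  refine Finset.sum_eq_zero fun k hk => ?_
  rw [Finset.mem_range] at hk
  by_cases hkp : k + 1 = p
  · have : ((B.sOp x) ^ (k + 1)) u = 0 :=
      B.sOp_pow_eq_zero hp hcard x u (by omega)
    rw [this, smul_zero]
  · have htor : p • ((B.sOp x ^ (k + 1)) u) = 0 := by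
      have h3 := map_nsmul ((B.sOp x) ^ (k + 1)) p u
      rw [hu, map_zero] at h3
      exact h3.symm
    rw [choose_factor hp (by omega) (by omega), mul_comm p _, mul_nsmul', htor, smul_zero]

/-- `u^{∘p} = 0` for `u ∈ ann(p)`. -/
lemma circPow_p_tors (hp : p.Prime) (hpn : n + 1 < p)
    (hcard : Fintype.card A = p ^ n) (u : A) (hu : p • u = 0) :
    B.circPow u p = 0 := by
  rw [B.circPow_eq_sum]
  refine Finset.sum_eq_zero fun k hk => ?_
  rw [Finset.mem_range] at hk
  by_cases hkp : k = p - 1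
  · have : ((B.sOp u) ^ k) u = 0 :=
      B.sOp_pow_eq_zero hp hcard u u (by omega)
    rw [this, smul_zero]
  · have htor : p • ((B.sOp u ^ k) u) = 0 := by
      have h3 := map_nsmul ((B.sOp u) ^ k) p u
      rw [hu, map_zero] at h3
      exact h3.symm
    rw [choose_factor hp (by omega) (by omega), mul_comm p _, mul_nsmul', htor, smul_zero]

/-- M3: `p • (u * b) = 0` for `u ∈ ann(p)`. -/
lemma star_tors_left (hp : p.Prime) (hpn : n + 1 < p)
    (hcard : Fintype.card A = p ^ n) (u : A) (hu : p • u = 0) (b : A) :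
    p • B.star u b = 0 := by
  have hID : ∀ c : A, ∑ k ∈ Finset.range p, (p.choose (k + 1)) • ((B.sOp u) ^ (k + 1)) c = 0 := by
    intro c
    rw [← B.star_circPow, B.circPow_p_tors hp hpn hcard u hu, B.zero_star]
  have claim : ∀ m k (b : A), 1 ≤ k → n ≤ k + m → p • ((B.sOp u) ^ k) b = 0 := by
    intro m
    induction m with
    | zero =>
      intro k b hk1 hkm
      rw [B.sOp_pow_eq_zero hp hcard u b (by omega), smul_zero]
    | succ m ih =>
      intro k b hk1 hkm
      by_cases hnk : n ≤ k
      · rw [B.sOp_pow_eq_zero hp hcard u b hnk, smul_zero]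
      have hid := hID (((B.sOp u) ^ (k - 1)) b)
      have hcomp : ∀ j : ℕ, ((B.sOp u) ^ (j + 1)) (((B.sOp u) ^ (k - 1)) b)
          = ((B.sOp u) ^ (j + k)) b := by
        intro j
        have h1 : ((B.sOp u) ^ (j + 1)) (((B.sOp u) ^ (k - 1)) b)
            = (((B.sOp u) ^ (j + 1)) * ((B.sOp u) ^ (k - 1))) b := rfl
        rw [h1, ← pow_add]
        congr 2
        omega
      rw [Finset.sum_congr rfl (fun j _ => by rw [hcomp j])] at hid
      have hp1 : p - 1 + 1 = p := by have := hp.two_le; omega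
      rw [← hp1, Finset.sum_range_succ'] at hid
      have hzero : ∑ j ∈ Finset.range (p - 1),
          ((p - 1 + 1).choose (j + 1 + 1)) • ((B.sOp u) ^ (j + 1 + k)) b = 0 := by
        refine Finset.sum_eq_zero fun j hj => ?_
        rw [Finset.mem_range] at hj
        by_cases hjp : j + 2 = p
        · have : ((B.sOp u) ^ (j + 1 + k)) b = 0 :=
            B.sOp_pow_eq_zero hp hcard u b (by omega)
          rw [this, smul_zero]
        · rw [hp1, choose_factor hp (by omega) (by omega), mul_comm p _, mul_nsmul']
          rw [ih (j + 1 + k) b (by omega) (by omega), smul_zero]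
      rw [hzero, zero_add] at hid
      have hch : (p - 1 + 1).choose (0 + 1) = p := by rw [hp1]; simp
      rw [hch, Nat.zero_add] at hid
      exact hid
  have := claim n 1 b (by omega) (by omega)
  rw [pow_one, B.sOp_apply] at this
  exact this

end LeftBrace
namespace LeftBrace

open Finset

variable {A : Type*} [AddCommGroup A] [Fintype A] (B : LeftBrace A) {p n : ℕ}

/-- decomposition `p•a = (a^{∘p}) ∘ (p•a₁)` with `a₁` one level deeper. -/
lemma pSmul_decomp (hp : p.Prime) (hpn : n + 1 < p) (hcard : Fintype.card A = p ^ n)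
    {d : ℕ} (a : A) (ha : a ∈ B.Dser d) :
    ∃ a₁ ∈ B.Dser (d + 1), p • a = B.circ (B.circPow a p) (p • a₁) := by
  have hp1 : p - 1 + 1 = p := by have := hp.two_le; omega
  -- the correction term w
  set w : A := ∑ k ∈ Finset.range (p - 2),
    (p.choose (k + 2) / p) • ((B.sOp a) ^ (k + 1)) a with hw
  have hwmem : w ∈ B.Dser (d + 1) := by
    refine AddSubgroup.sum_mem _ fun k _ => AddSubgroup.nsmul_mem _ ?_ _
    have := B.sOp_pow_mem_Dser a a (k + 1) d ha
    exact B.Dser_le_Dser (by omega) this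
  -- circPow a p = p • a + p • w
  have hkey : B.circPow a p = p • a + p • w := by
    rw [B.circPow_eq_sum]
    have hsplit : ∑ k ∈ Finset.range p, (p.choose (k + 1)) • ((B.sOp a) ^ k) a
        = (∑ k ∈ Finset.range (p - 1), (p.choose (k + 1)) • ((B.sOp a) ^ k) a)
          + (p.choose p) • ((B.sOp a) ^ (p - 1)) a := by
      rw [← hp1, Finset.sum_range_succ, hp1]
    rw [hsplit, B.sOp_pow_eq_zero hp hcard a a (by omega), smul_zero, add_zero]
    have hp2 : p - 2 + 1 = p - 1 := by have := hp.two_le; omega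
    have hsplit2 : ∑ k ∈ Finset.range (p - 1), (p.choose (k + 1)) • ((B.sOp a) ^ k) a
        = (∑ k ∈ Finset.range (p - 2), (p.choose (k + 1 + 1)) • ((B.sOp a) ^ (k + 1)) a)
          + (p.choose (0 + 1)) • ((B.sOp a) ^ 0) a := by
      rw [← hp2, Finset.sum_range_succ']
    rw [hsplit2]
    have hfirst : (p.choose (0 + 1)) • ((B.sOp a) ^ 0) a = p • a := by
      rw [pow_zero, Nat.choose_one_right]
      rfl
    have hrest : ∑ k ∈ Finset.range (p - 2), (p.choose (k + 1 + 1)) • ((B.sOp a) ^ (k + 1)) a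
        = p • w := by
      rw [hw, Finset.smul_sum]
      refine Finset.sum_congr rfl fun k hk => ?_
      rw [Finset.mem_range] at hk
      rw [← mul_nsmul']
      congr 1
      exact choose_factor hp (by omega) (by omega)
    rw [hfirst, hrest]
    abel
  -- assemble
  refine ⟨B.lam (B.inv (B.circPow a p)) (-w), ?_, ?_⟩
  · exact B.lam_mem_Dser _ (neg_mem hwmem)
  · have h1 : p • B.lam (B.inv (B.circPow a p)) (-w)
        = B.lam (B.inv (B.circPow a p)) (p • (-w)) := (AddMonoidHom.map_nsmul _ _ _).symm
    rw [h1, B.circ_add_eq, hkey]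
    rw [smul_neg]
    abel

/-- M1: `(p•a) * b ∈ pA`. -/
lemma star_pSmul_mem (hp : p.Prime) (hpn : n + 1 < p) (hcard : Fintype.card A = p ^ n)
    (a b : A) : B.star (p • a) b ∈ pMul (A := A) p := by
  have aux : ∀ m d (a b : A), n ≤ d + m → a ∈ B.Dser d →
      B.star (p • a) b ∈ pMul (A := A) p := by
    intro m
    induction m with
    | zero =>
      intro d a b hnd ha
      have ha0 : a = 0 := by
        have := B.Dser_le_Dser (by omega : n ≤ d) ha
        rw [B.Dser_n_eq_bot hp hcard] at this
        simpa using this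
      rw [ha0, smul_zero, B.zero_star]
      exact zero_mem _
    | succ m ih =>
      intro d a b hnd ha
      obtain ⟨a₁, ha₁, hdec⟩ := B.pSmul_decomp hp hpn hcard a ha
      rw [hdec, B.star_circ]
      have h3 : B.star (p • a₁) b ∈ pMul (A := A) p := ih (d + 1) a₁ b (by omega) ha₁
      have h2 : B.star (B.circPow a p) b ∈ pMul (A := A) p :=
        B.star_circPow_p_mem hp hpn hcard a b
      have h1 : B.star (B.circPow a p) (B.star (p • a₁) b) ∈ pMul (A := A) p :=
        B.star_circPow_p_mem hp hpn hcard a _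
      exact add_mem (add_mem h1 h2) h3
  exact aux n 0 a b (by omega) (AddSubgroup.mem_top a)

/-- M2: `(p•a) * u = 0` for `u ∈ ann(p)`. -/
lemma star_pSmul_tors (hp : p.Prime) (hpn : n + 1 < p) (hcard : Fintype.card A = p ^ n)
    (a u : A) (hu : p • u = 0) : B.star (p • a) u = 0 := by
  have aux : ∀ m d (a u : A), n ≤ d + m → a ∈ B.Dser d → p • u = 0 →
      B.star (p • a) u = 0 := by
    intro m
    induction m with
    | zero =>
      intro d a u hnd ha hu
      have ha0 : a = 0 := by
        have := B.Dser_le_Dser (by omega : n ≤ d) ha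
        rw [B.Dser_n_eq_bot hp hcard] at this
        simpa using this
      rw [ha0, smul_zero, B.zero_star]
    | succ m ih =>
      intro d a u hnd ha hu
      obtain ⟨a₁, ha₁, hdec⟩ := B.pSmul_decomp hp hpn hcard a ha
      rw [hdec, B.star_circ]
      have h3 : B.star (p • a₁) u = 0 := ih (d + 1) a₁ u (by omega) ha₁ hu
      have h2 : B.star (B.circPow a p) u = 0 :=
        B.star_circPow_p_tors hp hpn hcard a u hu
      rw [h3, B.star_zero_right, h2]
      abel
  exact aux n 0 a u (by omega) (AddSubgroup.mem_top a) hu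

end LeftBrace
namespace LeftBrace

variable {A : Type*} [AddCommGroup A] (B : LeftBrace A)

lemma star_nsmul_right (x z : A) (m : ℕ) : B.star x (m • z) = m • B.star x z := by
  rw [← B.sOp_apply, ← B.sOp_apply]
  exact AddMonoidHom.map_nsmul (B.sOp x) m z

lemma star_add_right (x y z : A) : B.star x (y + z) = B.star x y + B.star x z := by
  rw [← B.sOp_apply, ← B.sOp_apply, ← B.sOp_apply]
  exact map_add _ _ _

end LeftBrace

theorem stmt10 {A : Type*} [AddCommGroup A] [Fintype A] (B : LeftBrace A) (p n : ℕ)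
    (hp : p.Prime) (hpn : n + 1 < p) (hcard : Fintype.card A = p ^ n)
    (winv : A → A) (hwinv : ∀ a ∈ Set.range (fun x : A => p • x), p • winv a = a)
    (a a' b b' : A) (ha : p ^ 2 • (a - a') = 0) (hb : p ^ 2 • (b - b') = 0) :
    p ^ 2 • (winv (B.star (p • a) b) - winv (B.star (p • a') b')) = 0 := by
  have key : ∀ c : A, c ∈ LeftBrace.pMul (A := A) p → p ^ 2 • winv c = p • c := by
    intro c hcmem
    obtain ⟨x, hx⟩ := hcmem
    have h1 : p • winv c = c := hwinv c ⟨x, hx⟩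
    calc p ^ 2 • winv c = (p * p) • winv c := by rw [pow_two]
      _ = p • (p • winv c) := mul_nsmul' _ p p
      _ = p • c := by rw [h1]
  have e1 : p ^ 2 • winv (B.star (p • a) b) = p • B.star (p • a) b :=
    key _ (B.star_pSmul_mem hp hpn hcard a b)
  have e2 : p ^ 2 • winv (B.star (p • a') b') = p • B.star (p • a') b' :=
    key _ (B.star_pSmul_mem hp hpn hcard a' b')
  rw [smul_sub, e1, e2]
  -- now show p • ((p•a) * b) = p • ((p•a') * b')
  have hsq : ∀ z : A, p • (p • z) = p ^ 2 • z := fun z => by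
    rw [pow_two]; exact (mul_nsmul' z p p).symm
  -- step 1 : vary b
  have hstep1 : p • B.star (p • a) b = p • B.star (p • a) b' := by
    have hbb : b = b' + (b - b') := by abel
    have h2 : B.star (p • a) (p • (b - b')) = 0 := by
      refine B.star_pSmul_tors hp hpn hcard a _ ?_
      rw [hsq, hb]
    calc p • B.star (p • a) b = B.star (p • a) (p • b) := (B.star_nsmul_right _ _ _).symm
      _ = B.star (p • a) (p • b' + p • (b - b')) := by
          rw [← smul_add, ← hbb]
      _ = B.star (p • a) (p • b') + B.star (p • a) (p • (b - b')) := B.star_add_right _ _ _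
      _ = B.star (p • a) (p • b') := by rw [h2, add_zero]
      _ = p • B.star (p • a) b' := B.star_nsmul_right _ _ _
  -- step 2 : vary a
  have hstep2 : B.star (p • a) (p • b') = B.star (p • a') (p • b') := by
    set t : A := p • (a - a') with ht
    have htt : p • t = 0 := by rw [ht, hsq, ha]
    set y : A := B.lam (B.inv (p • a')) t with hy
    have hyt : p • y = 0 := by
      rw [hy, ← map_nsmul, htt, map_zero]
    have hsplit : p • a = B.circ (p • a') y := by
      rw [hy, B.circ_add_eq, ht, smul_sub]
      abel
    have hy0 : B.star y (p • b') = 0 := by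
      rw [B.star_nsmul_right]
      have := B.star_tors_left hp hpn hcard y hyt b'
      rw [← B.star_nsmul_right] at this ⊢
      rw [B.star_nsmul_right] at this ⊢
      exact this
    rw [hsplit, B.star_circ, hy0, B.star_zero_right, zero_add, add_zero]
  rw [hstep1, ← B.star_nsmul_right, hstep2, B.star_nsmul_right, sub_self]
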